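/- arXiv:2304.04519 — 3 statements merged into one kernel-verified Lean document; each statement's English description precedes it below -/
import Mathlib

section
/- Let q ≥ 1 and n ≥ 1, and let x_1, …, x_n be points of S^q. Define B(κ) := (∫_{-1}^{1} e^{κ(t-1)} (1-t²)^{q/2-1} dt) / (∫_{-1}^{1} (1-t²)^{q/2-1} dt) and the smooth maximum statistic T(κ) := (2/n) Σ_{1 ≤ i < j ≤ n} e^{κ(⟨x_i, x_j⟩ - 1)} − (n−1) B(κ) for κ > 0. Then, as κ → 0⁺, (q+1)·((e^κ/κ)·T(κ) + 1) converges to the Rayleigh statistic R_n = ((q+1)/n) Σ_{i,j=1}^{n} ⟨x_i, x_j⟩. -/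
open MeasureTheory Filter Topology Real

noncomputable section

open Set

lemma pair_sum {n : ℕ} (f : Fin n → Fin n → ℝ) (hsymm : ∀ i j, f i j = f j i) :
    ∑ i, ∑ j, f i j =
      2 * ∑ p ∈ Finset.univ.filter (fun p : Fin n × Fin n => p.1 < p.2), f p.1 p.2
        + ∑ i, f i i := by
  classical
  have h0 : ∑ i, ∑ j, f i j = ∑ p : Fin n × Fin n, f p.1 p.2 := by
    rw [← Finset.sum_product']
    rfl
  rw [h0, ← Finset.sum_filter_add_sum_filter_not Finset.univ (fun p : Fin n × Fin n => p.1 < p.2)]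
  have h1 : Finset.univ.filter (fun p : Fin n × Fin n => ¬ p.1 < p.2)
      = (Finset.univ.filter (fun p : Fin n × Fin n => p.2 < p.1))
        ∪ (Finset.univ.filter (fun p : Fin n × Fin n => p.1 = p.2)) := by
    ext p
    simp only [Finset.mem_filter, Finset.mem_union, Finset.mem_univ, true_and, not_lt]
    constructor
    · intro h
      rcases lt_or_eq_of_le h with h' | h'
      · exact Or.inl h'
      · exact Or.inr h'.symm
    · rintro (h | h)
      · exact h.le
      · exact h.ge
  have hdisj : Disjoint (Finset.univ.filter (fun p : Fin n × Fin n => p.2 < p.1))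
      (Finset.univ.filter (fun p : Fin n × Fin n => p.1 = p.2)) := by
    rw [Finset.disjoint_left]
    intro p hp hq
    simp only [Finset.mem_filter] at hp hq
    exact absurd hq.2 (ne_of_gt hp.2)
  rw [h1, Finset.sum_union hdisj]
  have h2 : ∑ p ∈ Finset.univ.filter (fun p : Fin n × Fin n => p.2 < p.1), f p.1 p.2
      = ∑ p ∈ Finset.univ.filter (fun p : Fin n × Fin n => p.1 < p.2), f p.1 p.2 := by
    refine Finset.sum_nbij' (fun p => Prod.swap p) (fun p => Prod.swap p) ?_ ?_ ?_ ?_ ?_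
    · intro p hp; simp only [Finset.mem_filter, Finset.mem_univ, true_and] at hp ⊢; exact hp
    · intro p hp; simp only [Finset.mem_filter, Finset.mem_univ, true_and] at hp ⊢; exact hp
    · intro p _; simp
    · intro p _; simp
    · intro p _; exact hsymm p.1 p.2
  have h3 : ∑ p ∈ Finset.univ.filter (fun p : Fin n × Fin n => p.1 = p.2), f p.1 p.2
      = ∑ i, f i i := by
    refine Finset.sum_nbij' (fun p => p.1) (fun i => (i, i)) ?_ ?_ ?_ ?_ ?_
    · intro p hp; simp
    · intro i _; simp
    · intro p hp
      simp only [Finset.mem_filter, Finset.mem_univ, true_and] at hp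
      simp [Prod.ext_iff, hp]
    · intro i _; rfl
    · intro p hp
      simp only [Finset.mem_filter, Finset.mem_univ, true_and] at hp
      rw [← hp]
  rw [h2, h3]; ring

lemma tendsto_exp_slope (a : ℝ) :
    Tendsto (fun κ : ℝ => (Real.exp (κ * a) - 1) / κ) (𝓝[>] 0) (𝓝 a) := by
  have h : HasDerivAt (fun κ : ℝ => Real.exp (κ * a)) a 0 := by
    have := ((Real.hasDerivAt_exp (0 * a)).comp 0 (hasDerivAt_mul_const a))
    simp only [zero_mul, Real.exp_zero, one_mul] at this
    exact this
  have h2 := hasDerivAt_iff_tendsto_slope.mp h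
  have h3 : Tendsto (slope (fun κ : ℝ => Real.exp (κ * a)) 0) (𝓝[>] 0) (𝓝 a) :=
    h2.mono_left (nhdsWithin_mono 0 (fun y hy => ne_of_gt hy))
  refine h3.congr fun κ => ?_
  rw [slope_def_field]
  simp

lemma w_meas (r : ℝ) : Measurable (fun t : ℝ => (1 - t ^ 2) ^ r) := by measurability

lemma w_integrable {r : ℝ} (hr : -1 < r) :
    IntervalIntegrable (fun t : ℝ => (1 - t ^ 2) ^ r) volume (-1) 1 := by
  set C : ℝ := max 1 (2 ^ r) with hC
  have hC1 : (1:ℝ) ≤ C := le_max_left _ _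
  have hC2 : (2:ℝ) ^ r ≤ C := le_max_right _ _
  have key : ∀ s : ℝ, 1 ≤ s → s ≤ 2 → s ^ r ≤ C := by
    intro s h1 h2
    rcases le_or_gt 0 r with h | h
    · exact le_trans (Real.rpow_le_rpow (by linarith) h2 h) hC2
    · exact le_trans (Real.rpow_le_one_of_one_le_of_nonpos h1 h.le) hC1
  have hfac : ∀ t : ℝ, t ∈ Icc (-1:ℝ) 1 → (1 - t ^ 2) ^ r = (1 - t) ^ r * (1 + t) ^ r := by
    intro t ht
    rw [show (1 : ℝ) - t ^ 2 = (1 - t) * (1 + t) by ring,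
      Real.mul_rpow (by linarith [ht.2]) (by linarith [ht.1])]
  rw [intervalIntegrable_iff_integrableOn_Ioc_of_le (by norm_num)]
  have hsplit : Ioc (-1:ℝ) 1 = Ioc (-1:ℝ) 0 ∪ Ioc (0:ℝ) 1 := by
    rw [Set.Ioc_union_Ioc_eq_Ioc (by norm_num) (by norm_num)]
  rw [hsplit]
  apply IntegrableOn.union
  · have hg : IntegrableOn (fun t : ℝ => C * (1 + t) ^ r) (Ioc (-1:ℝ) 0) volume := by
      have h0 : IntervalIntegrable (fun x : ℝ => x ^ r) volume 0 1 :=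
        intervalIntegral.intervalIntegrable_rpow' hr
      have h1 : IntervalIntegrable (fun x : ℝ => (1 + x) ^ r) volume (-1) 0 := by
        simpa using (h0.comp_add_left 1)
      have := (h1.const_mul C)
      rwa [intervalIntegrable_iff_integrableOn_Ioc_of_le (by norm_num)] at this
    refine hg.integrable.mono ((w_meas r).aestronglyMeasurable) (ae_restrict_of_forall_mem measurableSet_Ioc ?_)
    intro t ht
    have htI : t ∈ Icc (-1:ℝ) 1 := ⟨ht.1.le, ht.2.trans (by norm_num)⟩
    have h1t : (0:ℝ) ≤ (1+t) ^ r := Real.rpow_nonneg (by linarith [htI.1]) r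
    have h2t : (0:ℝ) ≤ (1-t) ^ r := Real.rpow_nonneg (by linarith [htI.2]) r
    rw [Real.norm_of_nonneg (by rw [hfac t htI]; positivity),
      Real.norm_of_nonneg (by positivity), hfac t htI]
    exact mul_le_mul_of_nonneg_right (key _ (by linarith [ht.2]) (by linarith [ht.1])) h1t
  · have hg : IntegrableOn (fun t : ℝ => C * (1 - t) ^ r) (Ioc (0:ℝ) 1) volume := by
      have h0 : IntervalIntegrable (fun x : ℝ => x ^ r) volume 0 1 :=
        intervalIntegral.intervalIntegrable_rpow' hr
      have h1 : IntervalIntegrable (fun x : ℝ => (1 - x) ^ r) volume 0 1 := by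
        simpa using (h0.comp_sub_left 1).symm
      have := (h1.const_mul C)
      rwa [intervalIntegrable_iff_integrableOn_Ioc_of_le (by norm_num)] at this
    refine hg.integrable.mono ((w_meas r).aestronglyMeasurable) (ae_restrict_of_forall_mem measurableSet_Ioc ?_)
    intro t ht
    have htI : t ∈ Icc (-1:ℝ) 1 := ⟨le_trans (by norm_num) ht.1.le, ht.2⟩
    have h1t : (0:ℝ) ≤ (1+t) ^ r := Real.rpow_nonneg (by linarith [htI.1]) r
    have h2t : (0:ℝ) ≤ (1-t) ^ r := Real.rpow_nonneg (by linarith [htI.2]) r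
    rw [Real.norm_of_nonneg (by rw [hfac t htI]; positivity),
      Real.norm_of_nonneg (by positivity), hfac t htI]
    have := mul_le_mul_of_nonneg_left (key (1+t) (by linarith [ht.1]) (by linarith [ht.2])) h2t
    linarith [this]

lemma W_pos {r : ℝ} (hr : -1 < r) :
    0 < ∫ t in (-1:ℝ)..1, (1 - t ^ 2) ^ r :=
  intervalIntegral.intervalIntegral_pos_of_pos_on (w_integrable hr)
    (fun t ht => Real.rpow_pos_of_pos (by nlinarith [ht.1, ht.2]) r) (by norm_num)

lemma odd_integral {r : ℝ} : (∫ t in (-1:ℝ)..1, t * (1 - t ^ 2) ^ r) = 0 := by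
  have h := intervalIntegral.integral_comp_neg (a := (-1:ℝ)) (b := 1)
    (fun t : ℝ => t * (1 - t ^ 2) ^ r)
  simp only [neg_neg] at h
  have h2 : (∫ x in (-1:ℝ)..1, (-x) * (1 - (-x) ^ 2) ^ r)
      = ∫ x in (-1:ℝ)..1, -(x * (1 - x ^ 2) ^ r) := by
    congr 1; funext x; rw [neg_sq]; ring
  rw [h2, intervalIntegral.integral_neg] at h
  linarith

lemma B_slope {r : ℝ} (hr : -1 < r) :
    Tendsto (fun κ : ℝ =>
        ((∫ t in (-1:ℝ)..1, Real.exp (κ * (t - 1)) * (1 - t ^ 2) ^ r) /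
          (∫ t in (-1:ℝ)..1, (1 - t ^ 2) ^ r) - 1) / κ)
      (𝓝[>] 0) (𝓝 (-1)) := by
  set w : ℝ → ℝ := fun t => (1 - t ^ 2) ^ r with hw
  have hint : IntervalIntegrable w volume (-1) 1 := w_integrable hr
  set W : ℝ := ∫ t in (-1:ℝ)..1, w t with hWdef
  have hW : 0 < W := W_pos hr
  -- integrability of exp(κ(t-1)) * w t
  have hEint : ∀ κ : ℝ, IntervalIntegrable (fun t => Real.exp (κ * (t - 1)) * w t) volume (-1) 1 :=
    fun κ => hint.continuousOn_mul (Continuous.continuousOn (by continuity))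
  -- the limit integral
  have hlimint : (∫ t in (-1:ℝ)..1, (t - 1) * w t) = -W := by
    have h1 : IntervalIntegrable (fun t => t * w t) volume (-1) 1 :=
      hint.continuousOn_mul continuous_id.continuousOn
    have h2 : (∫ t in (-1:ℝ)..1, (t - 1) * w t)
        = (∫ t in (-1:ℝ)..1, t * w t) - ∫ t in (-1:ℝ)..1, w t := by
      rw [← intervalIntegral.integral_sub h1 hint]
      congr 1; funext t; ring
    rw [h2, odd_integral, hWdef]; ring
  -- DCT
  have hDCT : Tendsto (fun κ : ℝ => ∫ t in (-1:ℝ)..1,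
        (Real.exp (κ * (t - 1)) * w t - w t) / κ) (𝓝[>] 0)
      (𝓝 (∫ t in (-1:ℝ)..1, (t - 1) * w t)) := by
    apply intervalIntegral.tendsto_integral_filter_of_dominated_convergence
      (bound := fun t => 2 * w t)
    · exact Eventually.of_forall fun κ =>
        ((((Real.measurable_exp.comp ((measurable_id.sub_const 1).const_mul κ)).mul
          (w_meas r)).sub (w_meas r)).div_const κ).aestronglyMeasurable
    · filter_upwards [self_mem_nhdsWithin] with κ (hκ : (0:ℝ) < κ)
      refine ae_of_all _ fun t ht => ?_
      rw [Set.uIoc_of_le (by norm_num : (-1:ℝ) ≤ 1)] at ht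
      have hwnn : 0 ≤ w t := Real.rpow_nonneg (by nlinarith [ht.1, ht.2]) r
      have h1 : Real.exp (κ * (t - 1)) ≤ 1 :=
        Real.exp_le_one_iff.mpr (by nlinarith [ht.1, ht.2])
      have h2 := Real.add_one_le_exp (κ * (t - 1))
      have he : |Real.exp (κ * (t - 1)) - 1| ≤ κ * 2 := by
        rw [abs_sub_comm, abs_of_nonneg (by linarith)]
        nlinarith [mul_le_mul_of_nonneg_left (by linarith [ht.1] : 1 - t ≤ 2) hκ.le]
      have habs : |Real.exp (κ * (t - 1)) * w t - w t| ≤ κ * 2 * w t := by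
        rw [show Real.exp (κ * (t - 1)) * w t - w t = (Real.exp (κ * (t - 1)) - 1) * w t by ring,
          abs_mul, abs_of_nonneg hwnn]
        exact mul_le_mul_of_nonneg_right he hwnn
      rw [Real.norm_eq_abs, abs_div, abs_of_pos hκ, div_le_iff₀ hκ]
      nlinarith
    · exact (w_integrable hr).const_mul 2
    · refine ae_of_all _ fun t _ => ?_
      have := (tendsto_exp_slope (t - 1)).mul_const (w t)
      refine this.congr fun κ => ?_
      ring
  -- rewrite the integrand
  have hDCT2 : Tendsto (fun κ : ℝ =>
      ((∫ t in (-1:ℝ)..1, Real.exp (κ * (t - 1)) * w t) - W) / κ) (𝓝[>] 0) (𝓝 (-W)) := by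
    rw [← hlimint]
    refine hDCT.congr fun κ => ?_
    rw [intervalIntegral.integral_div, intervalIntegral.integral_sub (hEint κ) hint]
  have := hDCT2.div_const W
  rw [neg_div, div_self hW.ne'] at this
  refine this.congr fun κ => ?_
  field_simp
  ring


/-- Proposition 1(i): as `κ → 0⁺`, the (monotonically transformed) smooth maximum statistic
converges to the Rayleigh statistic. -/
theorem smooth_maximum_tendsto_rayleigh (q n : ℕ) (hq : 1 ≤ q) (hn : 1 ≤ n)
    (x : Fin n → EuclideanSpace ℝ (Fin (q + 1))) (hx : ∀ i, ‖x i‖ = 1) :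
    Tendsto (fun κ : ℝ =>
        ((q : ℝ) + 1) * ((Real.exp κ / κ) *
          ((2 / n) * ∑ p ∈ Finset.univ.filter (fun p : Fin n × Fin n => p.1 < p.2),
              Real.exp (κ * ((inner ℝ (x p.1) (x p.2) : ℝ) - 1))
            - ((n : ℝ) - 1) *
              ((∫ t in (-1 : ℝ)..1, Real.exp (κ * (t - 1)) * (1 - t ^ 2) ^ ((q : ℝ) / 2 - 1)) /
                (∫ t in (-1 : ℝ)..1, (1 - t ^ 2) ^ ((q : ℝ) / 2 - 1))))
          + 1))
      (𝓝[>] 0)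
      (𝓝 ((((q : ℝ) + 1) / n) * ∑ i : Fin n, ∑ j : Fin n, (inner ℝ (x i) (x j) : ℝ))) := by

  classical
  have hn' : (n : ℝ) ≠ 0 := Nat.cast_ne_zero.mpr (by omega)
  have hq1 : (1:ℝ) ≤ (q:ℝ) := by exact_mod_cast hq
  have hr : -1 < (q:ℝ)/2 - 1 := by linarith
  set pairs := Finset.univ.filter (fun p : Fin n × Fin n => p.1 < p.2) with hpairs
  set c : Fin n × Fin n → ℝ := fun p => (inner ℝ (x p.1) (x p.2) : ℝ) with hc
  set B : ℝ → ℝ := fun κ =>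
      (∫ t in (-1 : ℝ)..1, Real.exp (κ * (t - 1)) * (1 - t ^ 2) ^ ((q : ℝ) / 2 - 1)) /
        (∫ t in (-1 : ℝ)..1, (1 - t ^ 2) ^ ((q : ℝ) / 2 - 1)) with hB
  -- cardinality fact
  have hcard : (n : ℝ) * n = 2 * (pairs.card : ℝ) + n := by
    have h := pair_sum (n := n) (fun _ _ => (1:ℝ)) (fun _ _ => rfl)
    simpa [Finset.sum_const, Finset.card_univ, nsmul_eq_mul, mul_comm] using h
  -- limit of each term
  have hBlim : Tendsto (fun κ : ℝ => (B κ - 1) / κ) (𝓝[>] 0) (𝓝 (-1)) := B_slope hr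
  have hexp : Tendsto (fun κ : ℝ => Real.exp κ) (𝓝[>] 0) (𝓝 1) := by
    simpa using (Real.continuous_exp.tendsto 0).mono_left nhdsWithin_le_nhds
  have hterm : ∀ p : Fin n × Fin n, Tendsto
      (fun κ : ℝ => Real.exp κ * ((Real.exp (κ * (c p - 1)) - 1) / κ - (B κ - 1) / κ))
      (𝓝[>] 0) (𝓝 (c p)) := by
    intro p
    have h := hexp.mul ((tendsto_exp_slope (c p - 1)).sub hBlim)
    have hv : (1:ℝ) * ((c p - 1) - (-1)) = c p := by ring
    rwa [hv] at h
  have hsum : Tendsto (fun κ : ℝ => ∑ p ∈ pairs,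
        Real.exp κ * ((Real.exp (κ * (c p - 1)) - 1) / κ - (B κ - 1) / κ))
      (𝓝[>] 0) (𝓝 (∑ p ∈ pairs, c p)) :=
    tendsto_finset_sum _ fun p _ => hterm p
  have hPhi : Tendsto (fun κ : ℝ => ((q:ℝ) + 1) * ((2 / (n:ℝ)) * ∑ p ∈ pairs,
        Real.exp κ * ((Real.exp (κ * (c p - 1)) - 1) / κ - (B κ - 1) / κ) + 1))
      (𝓝[>] 0) (𝓝 (((q:ℝ) + 1) * ((2 / (n:ℝ)) * ∑ p ∈ pairs, c p + 1))) :=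
    ((hsum.const_mul (2 / (n:ℝ))).add tendsto_const_nhds).const_mul ((q:ℝ) + 1)
  -- target value equality
  have hdiag : ∑ i : Fin n, (inner ℝ (x i) (x i) : ℝ) = n := by
    have : ∀ i : Fin n, (inner ℝ (x i) (x i) : ℝ) = 1 := fun i => by
      rw [real_inner_self_eq_norm_sq, hx i]; norm_num
    simp [this, hx]
  have htarget : (((q : ℝ) + 1) / n) * ∑ i : Fin n, ∑ j : Fin n, (inner ℝ (x i) (x j) : ℝ)
      = ((q:ℝ) + 1) * ((2 / (n:ℝ)) * ∑ p ∈ pairs, c p + 1) := by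
    have h := pair_sum (n := n) (fun i j => (inner ℝ (x i) (x j) : ℝ))
      (fun i j => real_inner_comm _ _)
    rw [h, hdiag]
    have h2 : ∑ p ∈ Finset.univ.filter (fun p : Fin n × Fin n => p.1 < p.2),
        (inner ℝ (x p.1) (x p.2) : ℝ) = ∑ p ∈ pairs, c p := rfl
    rw [h2]
    field_simp
  rw [htarget]
  -- eventual equality of functions
  refine Tendsto.congr' ?_ hPhi
  filter_upwards [self_mem_nhdsWithin] with κ (hκ : (0:ℝ) < κ)
  have hκ' : κ ≠ 0 := hκ.ne'
  have hsummand : ∀ p ∈ pairs,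
      Real.exp κ * ((Real.exp (κ * (c p - 1)) - 1) / κ - (B κ - 1) / κ)
        = (Real.exp κ / κ) * Real.exp (κ * (c p - 1)) - (Real.exp κ / κ) * B κ := by
    intro p _
    field_simp
    ring
  rw [Finset.sum_congr rfl hsummand, Finset.sum_sub_distrib, ← Finset.mul_sum,
    Finset.sum_const, nsmul_eq_mul]
  have hN' : (2 / (n:ℝ)) * (pairs.card : ℝ) = (n:ℝ) - 1 := by
    field_simp
    linarith
  show ((q:ℝ) + 1) * (2 / (n:ℝ) * ((Real.exp κ / κ) * ∑ p ∈ pairs, Real.exp (κ * (c p - 1))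
      - (pairs.card : ℝ) * ((Real.exp κ / κ) * B κ)) + 1)
    = ((q:ℝ) + 1) * ((Real.exp κ / κ) *
        ((2 / (n:ℝ)) * ∑ p ∈ pairs, Real.exp (κ * (c p - 1)) - ((n:ℝ) - 1) * B κ) + 1)
  linear_combination (-((q:ℝ) + 1) * (Real.exp κ / κ) * B κ) * hN'
end
end

section
/- Let q ≥ 1 and n ≥ 1, and let x_1, …, x_n be points of S^q. For 0 < ρ < 1 define the Poisson kernel ψ₂(t; ρ) := (1−ρ²)·(1 − 2ρt + ρ²)^{−(q+1)/2} for t ∈ [−1,1], B₂(ρ) := (∫_{-1}^{1} ψ₂(t; ρ) (1−t²)^{q/2−1} dt) / (∫_{-1}^{1} (1−t²)^{q/2−1} dt), and the Poisson kernel statistic T₂(ρ) := (2/n) Σ_{1 ≤ i < j ≤ n} ψ₂(⟨x_i, x_j⟩; ρ) − (n−1) B₂(ρ). Then, as ρ → 0⁺, (T₂(ρ) − 1 + (1+ρ)/(1−ρ)^q)/ρ converges to the Rayleigh statistic R_n = ((q+1)/n) Σ_{i,j=1}^{n} ⟨x_i, x_j⟩. -/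
open MeasureTheory Filter Topology Real Set
open scoped Interval

noncomputable section

/-- The Poisson kernel as a function of `ρ` and `t`. -/
def psiP (q : ℕ) (ρ t : ℝ) : ℝ :=
  (1 - ρ ^ 2) * (1 - 2 * ρ * t + ρ ^ 2) ^ (-(((q : ℝ) + 1) / 2))

/-- Its `ρ`-derivative. -/
def dpsiP (q : ℕ) (ρ t : ℝ) : ℝ :=
  -(2 * ρ ^ 1) * (1 - 2 * ρ * t + ρ ^ 2) ^ (-(((q : ℝ) + 1) / 2)) +
    (1 - ρ ^ 2) *
      ((-(2 * 1 * t) + 2 * ρ ^ 1) * (-(((q : ℝ) + 1) / 2)) *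
        (1 - 2 * ρ * t + ρ ^ 2) ^ (-(((q : ℝ) + 1) / 2) - 1))

lemma base_pos {ρ t : ℝ} (hρ : |ρ| ≤ 1 / 2) (ht : |t| ≤ 1) :
    (1 / 4 : ℝ) ≤ 1 - 2 * ρ * t + ρ ^ 2 := by
  obtain ⟨h1, h2⟩ := abs_le.mp hρ
  obtain ⟨h3, h4⟩ := abs_le.mp ht
  nlinarith [sq_nonneg (ρ - t / 2), mul_nonneg (by linarith : (0:ℝ) ≤ 1 - t)
    (by linarith : (0:ℝ) ≤ 1 + t), mul_nonneg (by linarith : (0:ℝ) ≤ 1/2 - ρ)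
    (by linarith : (0:ℝ) ≤ 1/2 + ρ)]

lemma psiP_hasDerivAt (q : ℕ) {ρ t : ℝ} (hρ : |ρ| ≤ 1 / 2) (ht : |t| ≤ 1) :
    HasDerivAt (fun ρ => psiP q ρ t) (dpsiP q ρ t) ρ := by
  have hB : (0 : ℝ) < 1 - 2 * ρ * t + ρ ^ 2 := lt_of_lt_of_le (by norm_num) (base_pos hρ ht)
  have h1 : HasDerivAt (fun ρ : ℝ => ρ) 1 ρ := hasDerivAt_id ρ
  have h2 : HasDerivAt (fun ρ : ℝ => 1 - 2 * ρ * t + ρ ^ 2) (-(2 * 1 * t) + 2 * ρ ^ 1) ρ :=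
    (((h1.const_mul 2).mul_const t).const_sub 1).add (hasDerivAt_pow 2 ρ)
  have h3 := h2.rpow_const (p := -(((q : ℝ) + 1) / 2)) (Or.inl hB.ne')
  have h4 : HasDerivAt (fun ρ : ℝ => 1 - ρ ^ 2) (-(2 * ρ ^ 1)) ρ :=
    (hasDerivAt_pow 2 ρ).const_sub 1
  exact h4.mul h3

lemma psiP_zero (q : ℕ) (t : ℝ) : psiP q 0 t = 1 := by
  simp [psiP]

lemma dpsiP_zero (q : ℕ) (t : ℝ) : dpsiP q 0 t = ((q : ℝ) + 1) * t := by
  simp [dpsiP]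
  ring

def CC (q : ℕ) : ℝ :=
  (4 : ℝ) ^ (((q : ℝ) + 1) / 2) + 3 * (((q : ℝ) + 1) / 2) * (4 : ℝ) ^ ((((q : ℝ) + 1) / 2) + 1)

lemma quarter_rpow (c : ℝ) : ((1 / 4 : ℝ)) ^ (-c) = (4 : ℝ) ^ c := by
  rw [show (1/4 : ℝ) = 4⁻¹ by norm_num, Real.inv_rpow (by norm_num),
    ← Real.rpow_neg (by norm_num), neg_neg]

lemma dpsiP_bound (q : ℕ) {ρ t : ℝ} (hρ : |ρ| ≤ 1 / 2) (ht : |t| ≤ 1) :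
    |dpsiP q ρ t| ≤ CC q := by
  set α : ℝ := ((q : ℝ) + 1) / 2 with hα
  have hα0 : (0 : ℝ) ≤ α := by positivity
  have hB4 := base_pos hρ ht
  have hB0 : (0 : ℝ) ≤ 1 - 2 * ρ * t + ρ ^ 2 := le_trans (by norm_num) hB4
  set X : ℝ := (1 - 2 * ρ * t + ρ ^ 2) ^ (-α) with hX
  set Y : ℝ := (1 - 2 * ρ * t + ρ ^ 2) ^ (-α - 1) with hY
  have hX0 : 0 ≤ X := Real.rpow_nonneg hB0 _
  have hY0 : 0 ≤ Y := Real.rpow_nonneg hB0 _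
  have hXle : X ≤ (4 : ℝ) ^ α := by
    rw [hX, ← quarter_rpow]
    exact Real.rpow_le_rpow_of_nonpos (by norm_num) hB4 (by linarith)
  have hYle : Y ≤ (4 : ℝ) ^ (α + 1) := by
    rw [hY, show -α - 1 = -(α + 1) by ring, ← quarter_rpow]
    exact Real.rpow_le_rpow_of_nonpos (by norm_num) hB4 (by linarith)
  obtain ⟨hρ1, hρ2⟩ := abs_le.mp hρ
  obtain ⟨ht1, ht2⟩ := abs_le.mp ht
  have e1 : |-(2 * ρ ^ 1) * X| ≤ (4 : ℝ) ^ α := by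
    rw [abs_mul, abs_neg, abs_of_nonneg hX0]
    have h2ρ : |2 * ρ ^ 1| ≤ 1 := by
      rw [abs_mul, abs_two, pow_one]
      have := abs_le.mpr ⟨hρ1, hρ2⟩
      linarith [abs_nonneg ρ, this]
    calc |2 * ρ ^ 1| * X ≤ 1 * ((4:ℝ) ^ α) :=
          mul_le_mul h2ρ hXle hX0 one_pos.le
      _ = (4:ℝ) ^ α := one_mul _
  have e2 : |(1 - ρ ^ 2) * ((-(2 * 1 * t) + 2 * ρ ^ 1) * (-α) * Y)| ≤ 3 * α * (4:ℝ) ^ (α + 1) := by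
    rw [abs_mul]
    have ha : |1 - ρ ^ 2| ≤ 1 := abs_le.mpr ⟨by nlinarith, by nlinarith⟩
    have hb : |(-(2 * 1 * t) + 2 * ρ ^ 1) * (-α) * Y| ≤ 3 * α * (4:ℝ) ^ (α + 1) := by
      rw [abs_mul, abs_mul, abs_neg, abs_of_nonneg hα0, abs_of_nonneg hY0]
      have hc : |(-(2 * 1 * t) + 2 * ρ ^ 1)| ≤ 3 := by
        rw [pow_one]
        exact abs_le.mpr ⟨by linarith, by linarith⟩
      calc |(-(2 * 1 * t) + 2 * ρ ^ 1)| * α * Y ≤ 3 * α * ((4:ℝ) ^ (α + 1)) := by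
            apply mul_le_mul _ hYle hY0 (by positivity)
            exact mul_le_mul hc le_rfl hα0 (by norm_num)
        _ = 3 * α * (4:ℝ) ^ (α + 1) := rfl
    calc |1 - ρ ^ 2| * |(-(2 * 1 * t) + 2 * ρ ^ 1) * (-α) * Y| ≤
          1 * (3 * α * (4:ℝ) ^ (α + 1)) := mul_le_mul ha hb (abs_nonneg _) one_pos.le
      _ = 3 * α * (4:ℝ) ^ (α + 1) := one_mul _
  calc |dpsiP q ρ t| ≤ |-(2 * ρ ^ 1) * X| + |(1 - ρ ^ 2) * ((-(2 * 1 * t) + 2 * ρ ^ 1) * (-α) * Y)| :=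
        abs_add_le _ _
    _ ≤ (4:ℝ) ^ α + 3 * α * (4:ℝ) ^ (α + 1) := add_le_add e1 e2
    _ = CC q := rfl

def wgt (q : ℕ) (t : ℝ) : ℝ := (1 - t ^ 2) ^ ((q : ℝ) / 2 - 1)

lemma aesm_of_contOn {f : ℝ → ℝ} (hf : ContinuousOn f (Ioo (-1 : ℝ) 1)) :
    AEStronglyMeasurable f (volume.restrict (Ι (-1 : ℝ) 1)) := by
  have h1 : Ι (-1 : ℝ) 1 = Ioc (-1 : ℝ) 1 := Set.uIoc_of_le (by norm_num)
  rw [h1, ← Measure.restrict_congr_set Ioo_ae_eq_Ioc]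
  exact hf.aestronglyMeasurable measurableSet_Ioo

lemma wgt_contOn (q : ℕ) : ContinuousOn (wgt q) (Ioo (-1 : ℝ) 1) := by
  intro t ht
  have h : (1 : ℝ) - t ^ 2 ≠ 0 := by nlinarith [ht.1, ht.2]
  exact (((continuous_const.sub (continuous_pow 2)).continuousAt).rpow_const
    (Or.inl h)).continuousWithinAt

lemma wgt_nonneg (q : ℕ) {t : ℝ} (ht : t ∈ Ι (-1 : ℝ) 1) : 0 ≤ wgt q t := by
  rw [Set.uIoc_of_le (by norm_num)] at ht
  exact Real.rpow_nonneg (by nlinarith [ht.1, ht.2]) _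

lemma wgt_integrable (q : ℕ) (hq : 1 ≤ q) : IntervalIntegrable (wgt q) volume (-1) 1 := by
  set r : ℝ := (q : ℝ) / 2 - 1 with hr
  have hr1 : (-1 : ℝ) < r := by
    have : (1 : ℝ) ≤ (q : ℝ) := by exact_mod_cast hq
    rw [hr]; linarith
  have hbase : IntervalIntegrable (fun s : ℝ => s ^ r) volume 0 2 :=
    intervalIntegral.intervalIntegrable_rpow' hr1
  have hg1 : IntervalIntegrable (fun t : ℝ => (1 - t) ^ r) volume (-1) 1 := by
    have := (hbase.comp_sub_left 1).symm
    norm_num at this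
    exact this
  have hg2 : IntervalIntegrable (fun t : ℝ => (1 + t) ^ r) volume (-1) 1 := by
    have := hbase.comp_add_left 1
    norm_num at this
    exact this
  have hg : IntervalIntegrable (fun t : ℝ => (1 - t) ^ r + (1 + t) ^ r + 1) volume (-1) 1 :=
    (hg1.add hg2).add intervalIntegrable_const
  apply hg.mono_fun' (aesm_of_contOn (wgt_contOn q))
  rw [Filter.EventuallyLE, ae_restrict_iff' measurableSet_uIoc]
  refine Eventually.of_forall fun t ht => ?_
  rw [Set.uIoc_of_le (by norm_num)] at ht
  obtain ⟨ht1, ht2⟩ := ht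
  have hu0 : (0:ℝ) ≤ 1 - t ^ 2 := by nlinarith
  have h1m : (0:ℝ) ≤ 1 - t := by linarith
  have h1p : (0:ℝ) < 1 + t := by linarith
  rw [Real.norm_eq_abs, show |wgt q t| = (1 - t ^ 2) ^ r from
    abs_of_nonneg (Real.rpow_nonneg hu0 _)]
  have hA : (0:ℝ) ≤ (1 - t) ^ r := Real.rpow_nonneg h1m _
  have hB : (0:ℝ) ≤ (1 + t) ^ r := Real.rpow_nonneg h1p.le _
  rcases le_or_gt 0 r with hr0 | hr0
  · have : (1 - t ^ 2) ^ r ≤ 1 := Real.rpow_le_one hu0 (by nlinarith) hr0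
    linarith
  · rcases eq_or_lt_of_le ht2 with h | h
    · rw [show (1:ℝ) - t ^ 2 = 0 by nlinarith [h], Real.zero_rpow (ne_of_lt hr0)]
      linarith
    · have h1m' : (0:ℝ) < 1 - t := by linarith
      rcases le_or_gt 0 t with h0 | h0
      · have : (1 - t ^ 2) ^ r ≤ (1 - t) ^ r :=
          Real.rpow_le_rpow_of_nonpos h1m' (by nlinarith) hr0.le
        linarith
      · have : (1 - t ^ 2) ^ r ≤ (1 + t) ^ r :=
          Real.rpow_le_rpow_of_nonpos h1p (by nlinarith) hr0.le
        linarith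

lemma wgt_integral_pos (q : ℕ) (hq : 1 ≤ q) : 0 < ∫ t in (-1 : ℝ)..1, wgt q t := by
  apply intervalIntegral.intervalIntegral_pos_of_pos_on (wgt_integrable q hq)
  · intro t ht
    exact Real.rpow_pos_of_pos (by nlinarith [ht.1, ht.2]) _
  · norm_num

lemma odd_integral_zero (q : ℕ) :
    ∫ t in (-1 : ℝ)..1, t * wgt q t = 0 := by
  have h := intervalIntegral.integral_comp_neg (a := (-1:ℝ)) (b := 1)
    (fun t => t * wgt q t)
  simp only [neg_neg] at h
  have h2 : ∀ t : ℝ, -t * wgt q (-t) = -(t * wgt q t) := by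
    intro t; simp only [wgt, neg_sq]; ring
  rw [show (fun t : ℝ => -t * wgt q (-t)) = fun t => -(t * wgt q t) from funext h2,
    intervalIntegral.integral_neg] at h
  linarith

lemma mem_uIoc_bounds {t : ℝ} (ht : t ∈ Ι (-1 : ℝ) 1) : |t| ≤ 1 := by
  rw [Set.uIoc_of_le (by norm_num)] at ht
  exact abs_le.mpr ⟨ht.1.le, ht.2⟩

lemma psiP_contOn (q : ℕ) {ρ : ℝ} (hρ : |ρ| ≤ 1 / 2) :
    ContinuousOn (fun t => psiP q ρ t * wgt q t) (Ioo (-1 : ℝ) 1) := by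
  apply ContinuousOn.mul _ (wgt_contOn q)
  intro t ht
  have ht' : |t| ≤ 1 := abs_le.mpr ⟨ht.1.le, ht.2.le⟩
  have hB : (0:ℝ) < 1 - 2 * ρ * t + ρ ^ 2 := lt_of_lt_of_le (by norm_num) (base_pos hρ ht')
  have hc : ContinuousAt (fun x : ℝ => 1 - 2 * ρ * x + ρ ^ 2) t := by fun_prop
  exact (continuousAt_const.mul (hc.rpow_const (Or.inl hB.ne'))).continuousWithinAt

lemma N_hasDerivAt (q : ℕ) (hq : 1 ≤ q) :
    HasDerivAt (fun ρ => ∫ t in (-1 : ℝ)..1, psiP q ρ t * wgt q t) 0 0 := by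
  have key := intervalIntegral.hasDerivAt_integral_of_dominated_loc_of_deriv_le
    (F := fun ρ t => psiP q ρ t * wgt q t) (F' := fun ρ t => dpsiP q ρ t * wgt q t)
    (x₀ := (0:ℝ)) (a := (-1:ℝ)) (b := 1) (μ := volume)
    (bound := fun t => CC q * wgt q t) (s := Metric.ball (0:ℝ) (1/2)) (Metric.ball_mem_nhds _ (by norm_num))
    ?_ ?_ ?_ ?_ ?_ ?_
  · have hz : (∫ t in (-1:ℝ)..1, dpsiP q 0 t * wgt q t) = 0 := by
      have : (fun t : ℝ => dpsiP q 0 t * wgt q t) =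
          fun t => ((q:ℝ) + 1) * (t * wgt q t) := by
        funext t; rw [dpsiP_zero]; ring
      rw [this, intervalIntegral.integral_const_mul, odd_integral_zero, mul_zero]
    have h2 := key.2
    beta_reduce at h2
    rw [hz] at h2
    exact h2
  · -- hF_meas
    filter_upwards [Metric.ball_mem_nhds (0:ℝ) (by norm_num : (0:ℝ) < 1/2)] with ρ hρ
    have hρ' : |ρ| ≤ 1/2 := by
      rw [Metric.mem_ball, Real.dist_eq, sub_zero] at hρ; exact hρ.le
    exact aesm_of_contOn (psiP_contOn q hρ')
  · -- hF_int : IntervalIntegrable (F 0)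
    have h : ((fun (ρ : ℝ) (t : ℝ) => psiP q ρ t * wgt q t) 0) = wgt q := by
      funext t; simp only [psiP_zero, one_mul]
    rw [show (fun t => psiP q 0 t * wgt q t) = wgt q from h]; exact wgt_integrable q hq
  · -- hF'_meas
    apply aesm_of_contOn
    show ContinuousOn (fun t => dpsiP q 0 t * wgt q t) (Ioo (-1 : ℝ) 1)
    apply ContinuousOn.mul _ (wgt_contOn q)
    have h : dpsiP q 0 = fun t => ((q:ℝ)+1) * t := by
      funext t; rw [dpsiP_zero]
    rw [h]
    exact (continuous_const.mul continuous_id).continuousOn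
  · -- h_bound
    refine Eventually.of_forall fun t ht ρ hρ => ?_
    have hρ' : |ρ| ≤ 1/2 := by
      rw [Metric.mem_ball, Real.dist_eq, sub_zero] at hρ; exact hρ.le
    rw [Real.norm_eq_abs, abs_mul, abs_of_nonneg (wgt_nonneg q ht)]
    exact mul_le_mul_of_nonneg_right (dpsiP_bound q hρ' (mem_uIoc_bounds ht)) (wgt_nonneg q ht)
  · exact (wgt_integrable q hq).const_mul (CC q)
  · -- h_diff
    refine Eventually.of_forall fun t ht ρ hρ => ?_
    have hρ' : |ρ| ≤ 1/2 := by
      rw [Metric.mem_ball, Real.dist_eq, sub_zero] at hρ; exact hρ.le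
    exact (psiP_hasDerivAt q hρ' (mem_uIoc_bounds ht)).mul_const (wgt q t)

lemma tendsto_slope_right {f : ℝ → ℝ} {L : ℝ} (h : HasDerivAt f L 0) :
    Tendsto (fun ρ => (f ρ - f 0) / ρ) (𝓝[>] (0:ℝ)) (𝓝 L) := by
  have h2 := hasDerivAt_iff_tendsto_slope.mp h
  have h3 : Tendsto (slope f 0) (𝓝[>] (0:ℝ)) (𝓝 L) :=
    h2.mono_left (nhdsWithin_mono _ fun x hx => ne_of_gt hx)
  exact h3.congr fun ρ => by rw [slope_def_field, sub_zero]

lemma sum_sym {n : ℕ} (g : Fin n → Fin n → ℝ) (hsymm : ∀ i j, g i j = g j i) :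
    ∑ i, ∑ j, g i j =
      2 * (∑ p ∈ Finset.univ.filter (fun p : Fin n × Fin n => p.1 < p.2), g p.1 p.2) +
        ∑ i, g i i := by
  classical
  have h0 : ∑ p : Fin n × Fin n, g p.1 p.2 = ∑ i, ∑ j, g i j := by
    rw [← Finset.univ_product_univ, Finset.sum_product' Finset.univ Finset.univ g]
  have h1 := Finset.sum_filter_add_sum_filter_not Finset.univ
    (fun p : Fin n × Fin n => p.1 < p.2) (fun p => g p.1 p.2)
  have h2 := Finset.sum_filter_add_sum_filter_not
    (Finset.univ.filter (fun p : Fin n × Fin n => ¬ p.1 < p.2))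
    (fun p : Fin n × Fin n => p.2 < p.1) (fun p => g p.1 p.2)
  rw [Finset.filter_filter, Finset.filter_filter] at h2
  have e1 : Finset.univ.filter (fun p : Fin n × Fin n => ¬ p.1 < p.2 ∧ p.2 < p.1) =
      Finset.univ.filter (fun p : Fin n × Fin n => p.2 < p.1) := by
    ext p
    simp only [Finset.mem_filter, Finset.mem_univ, true_and]
    exact ⟨fun h => h.2, fun h => ⟨not_lt.mpr h.le, h⟩⟩
  have e2 : Finset.univ.filter (fun p : Fin n × Fin n => ¬ p.1 < p.2 ∧ ¬ p.2 < p.1) =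
      Finset.univ.filter (fun p : Fin n × Fin n => p.1 = p.2) := by
    ext p
    simp only [Finset.mem_filter, Finset.mem_univ, true_and, not_lt]
    constructor
    · exact fun h => le_antisymm h.2 h.1
    · exact fun h => ⟨h.ge, h.le⟩
  rw [e1, e2] at h2
  have e3 : ∑ p ∈ Finset.univ.filter (fun p : Fin n × Fin n => p.2 < p.1), g p.1 p.2 =
      ∑ p ∈ Finset.univ.filter (fun p : Fin n × Fin n => p.1 < p.2), g p.1 p.2 := by
    apply Finset.sum_nbij' (i := Prod.swap) (j := Prod.swap)
    · intro p hp; simp only [Finset.mem_filter, Finset.mem_univ, true_and] at *; exact hp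
    · intro p hp; simp only [Finset.mem_filter, Finset.mem_univ, true_and] at *; exact hp
    · intro p _; exact Prod.swap_swap p
    · intro p _; exact Prod.swap_swap p
    · intro p _; exact hsymm p.1 p.2
  have e4 : ∑ p ∈ Finset.univ.filter (fun p : Fin n × Fin n => p.1 = p.2), g p.1 p.2 =
      ∑ i, g i i := by
    apply Finset.sum_nbij' (i := fun p : Fin n × Fin n => p.1) (j := fun i => (i, i))
    · intro p _; exact Finset.mem_univ _
    · intro i _; simp
    · intro p hp
      simp only [Finset.mem_filter, Finset.mem_univ, true_and] at hp
      rw [Prod.ext_iff]; exact ⟨rfl, hp⟩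
    · intro i _; rfl
    · intro p hp
      simp only [Finset.mem_filter, Finset.mem_univ, true_and] at hp
      rw [hp]
  rw [e3, e4] at h2
  linarith [h0, h1, h2]

/-- Proposition 2: as `ρ → 0⁺`, the (monotonically transformed) Poisson kernel statistic
converges to the Rayleigh statistic. -/
theorem poisson_kernel_tendsto_rayleigh (q n : ℕ) (hq : 1 ≤ q) (hn : 1 ≤ n)
    (x : Fin n → EuclideanSpace ℝ (Fin (q + 1))) (hx : ∀ i, ‖x i‖ = 1) :
    Tendsto (fun ρ : ℝ =>
        (((2 / n) * ∑ p ∈ Finset.univ.filter (fun p : Fin n × Fin n => p.1 < p.2),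
              (1 - ρ ^ 2) *
                (1 - 2 * ρ * (inner ℝ (x p.1) (x p.2) : ℝ) + ρ ^ 2) ^ (-(((q : ℝ) + 1) / 2))
            - ((n : ℝ) - 1) *
              ((∫ t in (-1 : ℝ)..1,
                  (1 - ρ ^ 2) * (1 - 2 * ρ * t + ρ ^ 2) ^ (-(((q : ℝ) + 1) / 2)) *
                    (1 - t ^ 2) ^ ((q : ℝ) / 2 - 1)) /
                (∫ t in (-1 : ℝ)..1, (1 - t ^ 2) ^ ((q : ℝ) / 2 - 1))))
          - 1 + (1 + ρ) / (1 - ρ) ^ q) / ρ)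
      (𝓝[>] 0)
      (𝓝 ((((q : ℝ) + 1) / n) * ∑ i : Fin n, ∑ j : Fin n, (inner ℝ (x i) (x j) : ℝ))) := by
  classical
  set P : Finset (Fin n × Fin n) :=
    Finset.univ.filter (fun p : Fin n × Fin n => p.1 < p.2) with hP
  set tp : Fin n × Fin n → ℝ := fun p => (inner ℝ (x p.1) (x p.2) : ℝ) with htp
  have htp_abs : ∀ p : Fin n × Fin n, |tp p| ≤ 1 := by
    intro p
    have := abs_real_inner_le_norm (x p.1) (x p.2)
    rw [hx p.1, hx p.2] at this; simpa using this
  have htp_symm : ∀ i j : Fin n, tp (i, j) = tp (j, i) := fun i j => real_inner_comm _ _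
  have htp_diag : ∀ i : Fin n, tp (i, i) = 1 := by
    intro i
    have := real_inner_self_eq_norm_sq (x i)
    rw [hx i] at this; simpa [htp] using this
  set D : ℝ := ∫ t in (-1 : ℝ)..1, wgt q t with hD
  set Nf : ℝ → ℝ := fun ρ => ∫ t in (-1 : ℝ)..1, psiP q ρ t * wgt q t with hNf
  have hDpos : 0 < D := wgt_integral_pos q hq
  have hNzero : Nf 0 = D := by
    rw [hNf, hD]
    simp only
    congr 1
    funext t
    rw [psiP_zero, one_mul]
  have hn0 : (n : ℝ) ≠ 0 := Nat.cast_ne_zero.mpr (by omega)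
  -- limit of the normalized B₂ part
  have hQ : Tendsto (fun ρ => (Nf ρ / D - 1) / ρ) (𝓝[>] (0:ℝ)) (𝓝 0) := by
    have h1 := tendsto_slope_right (N_hasDerivAt q hq)
    have h1' : Tendsto (fun ρ => (Nf ρ - Nf 0) / ρ) (𝓝[>] (0:ℝ)) (𝓝 0) := h1
    rw [hNzero] at h1'
    have h2 : Tendsto (fun ρ => (Nf ρ - D) / ρ * D⁻¹) (𝓝[>] (0:ℝ)) (𝓝 (0 * D⁻¹)) :=
      h1'.mul_const _
    rw [zero_mul] at h2
    apply h2.congr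
    intro ρ
    rw [div_mul_eq_mul_div, sub_mul, ← div_eq_mul_inv, mul_inv_cancel₀ (ne_of_gt hDpos)]
  -- limit of each pair term
  have hterm : ∀ p : Fin n × Fin n,
      Tendsto (fun ρ => (psiP q ρ (tp p) - 1) / ρ) (𝓝[>] (0:ℝ))
        (𝓝 (((q : ℝ) + 1) * tp p)) := by
    intro p
    have h1 := tendsto_slope_right (psiP_hasDerivAt q (ρ := 0) (by norm_num) (htp_abs p))
    rw [dpsiP_zero] at h1
    apply h1.congr
    intro ρ
    rw [psiP_zero]
  have hsum : Tendsto (fun ρ => ∑ p ∈ P, (psiP q ρ (tp p) - 1) / ρ) (𝓝[>] (0:ℝ))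
      (𝓝 (∑ p ∈ P, ((q : ℝ) + 1) * tp p)) :=
    tendsto_finset_sum P fun p _ => hterm p
  -- last term
  have hlast : Tendsto (fun ρ : ℝ => ((1 + ρ) / (1 - ρ) ^ q - 1) / ρ) (𝓝[>] (0:ℝ))
      (𝓝 ((q : ℝ) + 1)) := by
    have h1 : HasDerivAt (fun ρ : ℝ => 1 + ρ) 1 0 := by
      simpa using (hasDerivAt_id (0:ℝ)).const_add 1
    have hin : HasDerivAt (fun ρ : ℝ => 1 - ρ) (-1) 0 := by
      simpa using (hasDerivAt_id (0:ℝ)).const_sub 1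
    have h2 : HasDerivAt (fun ρ : ℝ => (1 - ρ) ^ q) ((q:ℝ) * (1 - 0) ^ (q - 1) * -1) 0 := hin.pow q
    have h3 : HasDerivAt (fun ρ : ℝ => (1 + ρ) / (1 - ρ) ^ q) ((1 * (1 - 0) ^ q - (1 + 0) * ((q:ℝ) * (1 - 0) ^ (q - 1) * -1)) / ((1 - 0) ^ q) ^ 2) 0 := h1.div h2 (by norm_num)
    have h4 : HasDerivAt (fun ρ : ℝ => (1 + ρ) / (1 - ρ) ^ q) ((q : ℝ) + 1) 0 := by
      convert h3 using 1
      norm_num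
      ring
    have h5 := tendsto_slope_right h4
    apply h5.congr
    intro ρ
    norm_num
  -- assemble
  have hsym : ∑ i : Fin n, ∑ j : Fin n, tp (i, j)
      = 2 * (∑ p ∈ P, tp (p.1, p.2)) + ∑ i : Fin n, tp (i, i) :=
    sum_sym (fun i j => tp (i, j)) (fun i j => htp_symm i j)
  have hPeta : ∑ p ∈ P, tp (p.1, p.2) = ∑ p ∈ P, tp p :=
    Finset.sum_congr rfl fun p _ => by rw [Prod.mk.eta]
  rw [hPeta] at hsym
  have hdiag : ∑ i : Fin n, tp (i, i) = (n : ℝ) := by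
    rw [Finset.sum_congr rfl fun i _ => htp_diag i]
    simp
  have hcard : (n : ℝ) * n = 2 * (P.card : ℝ) + n := by
    have h1 := sum_sym (fun _ _ : Fin n => (1:ℝ)) (fun _ _ => rfl)
    simpa using h1
  have hG : Tendsto (fun ρ =>
      (2 / (n:ℝ)) * (∑ p ∈ P, (psiP q ρ (tp p) - 1) / ρ)
        - ((n:ℝ) - 1) * ((Nf ρ / D - 1) / ρ) + ((1 + ρ) / (1 - ρ) ^ q - 1) / ρ)
      (𝓝[>] (0:ℝ))
      (𝓝 ((2 / (n:ℝ)) * (∑ p ∈ P, ((q:ℝ) + 1) * tp p) - ((n:ℝ) - 1) * 0 + ((q:ℝ) + 1))) :=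
    ((hsum.const_mul _).sub (hQ.const_mul _)).add hlast
  have hval : (2 / (n:ℝ)) * (∑ p ∈ P, ((q:ℝ) + 1) * tp p) - ((n:ℝ) - 1) * 0 + ((q:ℝ) + 1)
      = (((q : ℝ) + 1) / n) * ∑ i : Fin n, ∑ j : Fin n, (inner ℝ (x i) (x j) : ℝ) := by
    have hcast : (∑ i : Fin n, ∑ j : Fin n, (inner ℝ (x i) (x j) : ℝ))
        = ∑ i : Fin n, ∑ j : Fin n, tp (i, j) := rfl
    rw [hcast, hsym, hdiag, ← Finset.mul_sum]
    field_simp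
    ring
  rw [← hval]
  apply hG.congr'
  filter_upwards [self_mem_nhdsWithin] with ρ hρ
  have hρ0 : ρ ≠ 0 := ne_of_gt hρ
  have hsplit : ∑ p ∈ P, (psiP q ρ (tp p) - 1) / ρ
      = ((∑ p ∈ P, psiP q ρ (tp p)) - (P.card : ℝ)) / ρ := by
    rw [← Finset.sum_div, Finset.sum_sub_distrib, Finset.sum_const, nsmul_eq_mul, mul_one]
  rw [hsplit]
  have hexp : ∀ p : Fin n × Fin n, psiP q ρ (tp p) =
      (1 - ρ ^ 2) * (1 - 2 * ρ * (inner ℝ (x p.1) (x p.2) : ℝ) + ρ ^ 2) ^ (-(((q : ℝ) + 1) / 2)) :=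
    fun p => rfl
  show (2 / (n:ℝ)) * (((∑ p ∈ P, psiP q ρ (tp p)) - (P.card : ℝ)) / ρ)
      - ((n:ℝ) - 1) * ((Nf ρ / D - 1) / ρ) + ((1 + ρ) / (1 - ρ) ^ q - 1) / ρ
    = ((2 / n) * (∑ p ∈ P, psiP q ρ (tp p))
        - ((n : ℝ) - 1) * (Nf ρ / D) - 1 + (1 + ρ) / (1 - ρ) ^ q) / ρ
  set S : ℝ := ∑ p ∈ P, psiP q ρ (tp p)
  set Qv : ℝ := Nf ρ / D
  set Fv : ℝ := (1 + ρ) / (1 - ρ) ^ q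
  set c : ℝ := (P.card : ℝ)
  field_simp
  linear_combination hcard
end
end

section
/- Let u, v be points of the unit circle S¹ ⊂ ℝ², let ν₁ be the uniform probability measure on S¹, and let k, m ≥ 0 be integers. Then ∫_{S¹} T_k(⟨γ, u⟩)·T_m(⟨γ, v⟩) dν₁(γ) = δ_{k,m} · ((1 + δ_{k,0})/2) · T_k(⟨u, v⟩), where δ is the Kronecker delta. -/
open MeasureTheory Filter Topology Real

noncomputable section

/-- The uniform (rotation-invariant) probability measure on the unit circle `S¹ ⊆ ℝ²`,
obtained by normalizing the arc-length measure. -/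
noncomputable def unifCircle : Measure (Metric.sphere (0 : EuclideanSpace ℝ (Fin 2)) 1) :=
  (((volume : Measure (EuclideanSpace ℝ (Fin 2))).toSphere Set.univ)⁻¹) •
    (volume : Measure (EuclideanSpace ℝ (Fin 2))).toSphere

namespace CCA
open Set Metric

noncomputable def circ (θ : ℝ) : EuclideanSpace ℝ (Fin 2) :=
  (WithLp.equiv 2 (Fin 2 → ℝ)).symm ![Real.cos θ, Real.sin θ]

lemma norm_circ (θ : ℝ) : ‖circ θ‖ = 1 := by
  rw [EuclideanSpace.norm_eq]
  simp [circ, Fin.sum_univ_two, Real.cos_sq_add_sin_sq, sq_abs]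

lemma inner_circ (θ φ : ℝ) :
    (inner ℝ (circ θ) (circ φ) : ℝ) = Real.cos (θ - φ) := by
  simp [circ, PiLp.inner_apply, RCLike.inner_apply, Fin.sum_univ_two, Real.cos_sub]
  ring


lemma exists_angle (u : Metric.sphere (0 : EuclideanSpace ℝ (Fin 2)) 1) :
    ∃ a : ℝ, (u : EuclideanSpace ℝ (Fin 2)) = circ a := by
  set x := (u : EuclideanSpace ℝ (Fin 2)) 0
  set y := (u : EuclideanSpace ℝ (Fin 2)) 1
  have hu : Real.sqrt (x ^ 2 + y ^ 2) = 1 := by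
    have := u.2
    rw [mem_sphere_zero_iff_norm, EuclideanSpace.norm_eq] at this
    simpa [Fin.sum_univ_two, sq_abs] using this
  set z : ℂ := ⟨x, y⟩ with hz
  have habs : ‖z‖ = 1 := by
    rw [Complex.norm_def, Complex.normSq_mk] at *
    rw [← hu]; ring_nf
  have hz0 : z ≠ 0 := by
    intro h; rw [h] at habs; simp at habs
  refine ⟨Complex.arg z, ?_⟩
  have hc : Real.cos (Complex.arg z) = x := by
    rw [Complex.cos_arg hz0, habs]; simp [hz]
  have hs : Real.sin (Complex.arg z) = y := by
    rw [Complex.sin_arg, habs]; simp [hz]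
  ext i
  fin_cases i
  · simpa [circ] using hc.symm
  · simpa [circ] using hs.symm


noncomputable def ind : ℝ → ℝ := Set.indicator (Set.Ioo (0:ℝ) 1) 1

lemma half_aux : ∫ r in Set.Ioi (0:ℝ), r * ind r = 1/2 := by
  have h1 : ∀ r : ℝ, r * ind r = Set.indicator (Set.Ioo (0:ℝ) 1) id r := by
    intro r
    by_cases h : r ∈ Set.Ioo (0:ℝ) 1 <;> simp [ind, Set.indicator_of_mem, h]
  simp_rw [h1]
  rw [setIntegral_indicator measurableSet_Ioo,
    Set.inter_eq_self_of_subset_right Set.Ioo_subset_Ioi_self,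
    setIntegral_congr_set Ioo_ae_eq_Ioc, ← intervalIntegral.integral_of_le zero_le_one]
  simp [integral_id]

lemma int_cos (n : ℤ) (c : ℝ) :
    ∫ θ in (-π)..π, Real.cos (n * θ + c) = if n = 0 then 2 * π * Real.cos c else 0 := by
  rcases eq_or_ne n 0 with rfl | hn
  · rw [if_pos rfl]
    simp only [Int.cast_zero, zero_mul, zero_add, intervalIntegral.integral_const,
      smul_eq_mul, sub_neg_eq_add]
    ring
  · have hn' : (n : ℝ) ≠ 0 := Int.cast_ne_zero.2 hn
    rw [if_neg hn, intervalIntegral.integral_comp_mul_add Real.cos hn' c,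
      integral_cos]
    have h1 : Real.sin ((n:ℝ) * π + c) = Real.cos ((n:ℝ) * π) * Real.sin c := by
      rw [Real.sin_add, Real.sin_int_mul_pi]; ring
    have h2 : Real.sin ((n:ℝ) * (-π) + c) = Real.cos ((n:ℝ) * π) * Real.sin c := by
      rw [show (n:ℝ) * (-π ) + c = -((n:ℝ) * π) + c by ring, Real.sin_add, Real.sin_neg,
        Real.cos_neg, Real.sin_int_mul_pi]; ring
    rw [h1, h2]
    simp


lemma integral_toSphere_eq (g : EuclideanSpace ℝ (Fin 2) → ℝ) :
    (∫ γ : Metric.sphere (0 : EuclideanSpace ℝ (Fin 2)) 1, g γ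
        ∂((volume : Measure (EuclideanSpace ℝ (Fin 2))).toSphere))
      = ∫ θ in Set.Ioo (-π) π, g (circ θ) := by
  set F : EuclideanSpace ℝ (Fin 2) → ℝ := fun x => g (‖x‖⁻¹ • x) * ind ‖x‖ with hF
  have h21 : Module.finrank ℝ (EuclideanSpace ℝ (Fin 2)) - 1 = 1 := by
    simp [finrank_euclideanSpace_fin]
  have hpow : (∫ r : Set.Ioi (0:ℝ), ind r
      ∂(Measure.volumeIoiPow (Module.finrank ℝ (EuclideanSpace ℝ (Fin 2)) - 1))) = 1/2 := by
    rw [h21, Measure.volumeIoiPow]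
    simp only [ENNReal.ofReal]
    rw [integral_withDensity_eq_integral_smul
      ((measurable_subtype_coe.pow_const _).real_toNNReal) (fun r : Set.Ioi (0:ℝ) => ind r)]
    rw [integral_subtype_comap measurableSet_Ioi (fun a : ℝ => Real.toNNReal (a ^ 1) • ind a)]
    rw [← half_aux]
    refine setIntegral_congr_fun measurableSet_Ioi fun x hx => ?_
    rw [NNReal.smul_def, Real.coe_toNNReal _ (pow_nonneg (le_of_lt hx) 1), pow_one, smul_eq_mul]
  have route1 :
      (∫ x, F x ∂(volume : Measure (EuclideanSpace ℝ (Fin 2))))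
        = (∫ γ : Metric.sphere (0 : EuclideanSpace ℝ (Fin 2)) 1, g γ
            ∂((volume : Measure (EuclideanSpace ℝ (Fin 2))).toSphere)) * (1/2) := by
    calc ∫ x, F x ∂(volume : Measure (EuclideanSpace ℝ (Fin 2)))
        = ∫ x : ({0}ᶜ : Set (EuclideanSpace ℝ (Fin 2))), F x.1
            ∂((volume : Measure (EuclideanSpace ℝ (Fin 2))).comap (↑)) := by
          rw [integral_subtype_comap (measurableSet_singleton _).compl F,
            MeasureTheory.restrict_compl_singleton]
      _ = ∫ y : Metric.sphere (0 : EuclideanSpace ℝ (Fin 2)) 1 × Set.Ioi (0:ℝ),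
            g y.1 * ind y.2
            ∂(((volume : Measure (EuclideanSpace ℝ (Fin 2))).toSphere).prod
              (Measure.volumeIoiPow (Module.finrank ℝ (EuclideanSpace ℝ (Fin 2)) - 1))) := by
          rw [← (Measure.measurePreserving_homeomorphUnitSphereProd
            (volume : Measure (EuclideanSpace ℝ (Fin 2)))).integral_comp
            (Homeomorph.measurableEmbedding _) (fun y => g y.1 * ind y.2)]
          refine integral_congr_ae (Eventually.of_forall fun x => ?_)
          simp [hF, Function.comp]
      _ = (∫ γ : Metric.sphere (0 : EuclideanSpace ℝ (Fin 2)) 1, g γ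
            ∂((volume : Measure (EuclideanSpace ℝ (Fin 2))).toSphere))
          * (∫ r : Set.Ioi (0:ℝ), ind r
            ∂(Measure.volumeIoiPow (Module.finrank ℝ (EuclideanSpace ℝ (Fin 2)) - 1))) :=
          integral_prod_mul (fun γ : Metric.sphere (0 : EuclideanSpace ℝ (Fin 2)) 1 => g γ)
            (fun r : Set.Ioi (0:ℝ) => ind r)
      _ = _ := by rw [hpow]
  have hψmp : MeasurePreserving
      (⇑((MeasurableEquiv.finTwoArrow.symm).trans
        (MeasurableEquiv.toLp 2 (Fin 2 → ℝ))))
      (volume : Measure (ℝ × ℝ)) (volume : Measure (EuclideanSpace ℝ (Fin 2))) :=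
    ((EuclideanSpace.volume_preserving_symm_measurableEquiv_toLp (Fin 2)).symm _).comp
      ((volume_preserving_finTwoArrow ℝ).symm _)
  set ψ : (ℝ × ℝ) ≃ᵐ EuclideanSpace ℝ (Fin 2) :=
    (MeasurableEquiv.finTwoArrow.symm).trans (MeasurableEquiv.toLp 2 (Fin 2 → ℝ))
    with hψ
  have hψ_polar : ∀ p : ℝ × ℝ, ψ (polarCoord.symm p) = p.1 • circ p.2 := by
    rintro ⟨r, θ⟩
    show ψ (r * Real.cos θ, r * Real.sin θ) = _
    ext i
    fin_cases i <;>
      simp [hψ, circ, MeasurableEquiv.finTwoArrow, MeasurableEquiv.coe_toLp,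
        finTwoArrowEquiv, piFinTwoEquiv]
  have route2 : (∫ x, F x ∂(volume : Measure (EuclideanSpace ℝ (Fin 2))))
      = (1/2) * ∫ θ in Set.Ioo (-π) π, g (circ θ) := by
    rw [← hψmp.integral_comp ψ.measurableEmbedding F,
      ← integral_comp_polarCoord_symm (fun p => F (ψ p))]
    have hcongr : Set.EqOn (fun p : ℝ × ℝ => p.1 • F (ψ (polarCoord.symm p)))
        (fun p : ℝ × ℝ => (p.1 * ind p.1) * g (circ p.2))
        (Set.Ioi (0:ℝ) ×ˢ Set.Ioo (-π) π) := by
      rintro ⟨r, θ⟩ ⟨hr, -⟩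
      have hr0 : (0:ℝ) < r := hr
      have hnorm : ‖r • circ θ‖ = r := by
        rw [norm_smul, norm_circ, mul_one, Real.norm_eq_abs, abs_of_pos hr0]
      simp only [hψ_polar, hF, smul_eq_mul]
      rw [hnorm, smul_smul, inv_mul_cancel₀ hr0.ne', one_smul]
      ring
    rw [show polarCoord.target = Set.Ioi (0:ℝ) ×ˢ Set.Ioo (-π) π from rfl,
      setIntegral_congr_fun (measurableSet_Ioi.prod measurableSet_Ioo) hcongr,
      Measure.volume_eq_prod,
      setIntegral_prod_mul (f := fun r : ℝ => r * ind r) (g := fun θ : ℝ => g (circ θ)), half_aux]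
  rw [route2] at route1
  linarith


end CCA

/-- Double products of Chebyshev polynomials over the uniform measure on the circle
(circular case of Lemma 1 of the Supplementary Materials). -/
theorem integral_chebyshev_double_product
    (u v : Metric.sphere (0 : EuclideanSpace ℝ (Fin 2)) 1) (k m : ℕ) :
    ∫ γ, (Polynomial.Chebyshev.T ℝ k).eval
          (inner ℝ (γ : EuclideanSpace ℝ (Fin 2)) (u : EuclideanSpace ℝ (Fin 2)) : ℝ) *
        (Polynomial.Chebyshev.T ℝ m).eval
          (inner ℝ (γ : EuclideanSpace ℝ (Fin 2)) (v : EuclideanSpace ℝ (Fin 2)) : ℝ)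
        ∂unifCircle
      = (if k = m then (1 : ℝ) else 0) * ((1 + if k = 0 then (1 : ℝ) else 0) / 2) *
          (Polynomial.Chebyshev.T ℝ k).eval
            (inner ℝ (u : EuclideanSpace ℝ (Fin 2)) (v : EuclideanSpace ℝ (Fin 2)) : ℝ) := by
  obtain ⟨a, ha⟩ := CCA.exists_angle u
  obtain ⟨b, hb⟩ := CCA.exists_angle v
  have hπ : (0:ℝ) < π := Real.pi_pos
  set g : EuclideanSpace ℝ (Fin 2) → ℝ := fun x =>
    (Polynomial.Chebyshev.T ℝ k).eval (inner ℝ x (u : EuclideanSpace ℝ (Fin 2)) : ℝ) *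
    (Polynomial.Chebyshev.T ℝ m).eval (inner ℝ x (v : EuclideanSpace ℝ (Fin 2)) : ℝ) with hg
  have htot : ((volume : Measure (EuclideanSpace ℝ (Fin 2))).toSphere Set.univ).toReal
      = 2 * π := by
    have h := CCA.integral_toSphere_eq (fun _ => (1:ℝ))
    rw [integral_const, setIntegral_const, Real.volume_real_Ioo, smul_eq_mul, smul_eq_mul, mul_one,
      mul_one] at h
    rw [← measureReal_def, h]
    rw [max_eq_left (by linarith)]; ring
  have hstep1 : (∫ γ, g γ ∂unifCircle) = (2*π)⁻¹ * ∫ θ in Set.Ioo (-π) π, g (CCA.circ θ) := by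
    rw [unifCircle, integral_smul_measure, ENNReal.toReal_inv, htot, smul_eq_mul,
      CCA.integral_toSphere_eq g]
  set n1 : ℤ := (k : ℤ) - m with hn1
  set n2 : ℤ := (k : ℤ) + m with hn2
  set c1 : ℝ := m * b - k * a with hc1
  set c2 : ℝ := -(k * a + m * b) with hc2
  have pts : ∀ X Y : ℝ, Real.cos X * Real.cos Y = (Real.cos (X - Y) + Real.cos (X + Y))/2 := by
    intro X Y; rw [Real.cos_sub, Real.cos_add]; ring
  have key : ∀ θ : ℝ, g (CCA.circ θ)
      = (Real.cos (n1*θ + c1) + Real.cos (n2*θ + c2))/2 := by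
    intro θ
    rw [hg]
    simp only [ha, hb, CCA.inner_circ]
    rw [Polynomial.Chebyshev.T_real_cos, Polynomial.Chebyshev.T_real_cos, pts,
      show ((k:ℤ):ℝ)*(θ-a) - ((m:ℤ):ℝ)*(θ-b) = (n1:ℝ)*θ + c1 by
        simp only [hn1, hc1]; push_cast; ring,
      show ((k:ℤ):ℝ)*(θ-a) + ((m:ℤ):ℝ)*(θ-b) = (n2:ℝ)*θ + c2 by
        simp only [hn2, hc2]; push_cast; ring]
  have hstep2 : (∫ θ in Set.Ioo (-π) π, g (CCA.circ θ))
      = ((if n1 = 0 then 2 * π * Real.cos c1 else 0)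
        + (if n2 = 0 then 2 * π * Real.cos c2 else 0))/2 := by
    have h1 : IntervalIntegrable (fun θ : ℝ => Real.cos ((n1:ℝ)*θ + c1)) volume (-π) π :=
      (Continuous.intervalIntegrable (by fun_prop) _ _)
    have h2 : IntervalIntegrable (fun θ : ℝ => Real.cos ((n2:ℝ)*θ + c2)) volume (-π) π :=
      (Continuous.intervalIntegrable (by fun_prop) _ _)
    simp only [key]
    rw [setIntegral_congr_set Ioo_ae_eq_Ioc,
      ← intervalIntegral.integral_of_le (by linarith : -π ≤ π),
      intervalIntegral.integral_div, intervalIntegral.integral_add h1 h2,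
      CCA.int_cos, CCA.int_cos]
  have hTuv : (Polynomial.Chebyshev.T ℝ k).eval
      (inner ℝ (u : EuclideanSpace ℝ (Fin 2)) (v : EuclideanSpace ℝ (Fin 2)) : ℝ)
      = Real.cos (k * (a - b)) := by
    rw [ha, hb, CCA.inner_circ, Polynomial.Chebyshev.T_real_cos]
    push_cast; ring_nf
  rw [hstep1, hstep2, hTuv]
  by_cases hkm : k = m
  · subst hkm
    have hn1z : n1 = 0 := by omega
    rw [if_pos hn1z, if_pos rfl]
    have hcc1 : Real.cos c1 = Real.cos ((k:ℝ) * (a - b)) := by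
      rw [hc1, show (k:ℝ) * b - k * a = -((k:ℝ) * (a - b)) by ring, Real.cos_neg]
    by_cases hk0 : k = 0
    · subst hk0
      have hn2z : n2 = 0 := by omega
      rw [if_pos hn2z, if_pos rfl]
      have e1 : c1 = 0 := by simp [hc1]
      have e2 : c2 = 0 := by simp [hc2]
      rw [e1, e2, Real.cos_zero]
      norm_num
      field_simp
    · have hn2z : n2 ≠ 0 := by omega
      rw [if_neg hn2z, if_neg hk0, hcc1]
      field_simp
      ring
  · have hn1z : n1 ≠ 0 := by omega
    have hn2z : n2 ≠ 0 := by omega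
    rw [if_neg hn1z, if_neg hn2z, if_neg hkm]
    ring
end
end
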